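/- Let p < 1 be real and (λ_n) be positive reals with Λ_n → ∞ and λ_n/Λ_n → η ∈ [0,1). Then lim_{n→∞} ∑_{k=1}^n (λ_k/Λ_n)·(Λ_k/Λ_n)^{−p} equals 1/(1−p) if η = 0, and equals η/(1 − (1−η)^{1−p}) if η ∈ (0,1). -/

import Mathlib

open Filter

/-- Stolz–Cesàro: if `b n > 0`, partial sums of `b` tend to infinity, and
`a n / b n → L`, then the ratio of partial sums tends to `L`. -/
lemma stolz_cesaro {a b : ℕ → ℝ} (hb : ∀ n, 0 < b n)
    (hB : Tendsto (fun n => ∑ i ∈ Finset.range n, b i) atTop atTop)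
    {L : ℝ} (hab : Tendsto (fun n => a n / b n) atTop (nhds L)) :
    Tendsto (fun n => (∑ i ∈ Finset.range n, a i) / (∑ i ∈ Finset.range n, b i))
      atTop (nhds L) := by
  have hf : (fun n => a n - L * b n) =o[atTop] b := by
    rw [Asymptotics.isLittleO_iff_tendsto (fun x hx => absurd hx (hb x).ne')]
    have heq : (fun n => (a n - L * b n) / b n) = fun n => a n / b n - L := by
      funext n
      rw [sub_div, mul_div_cancel_right₀ _ (hb n).ne']
    rw [heq]
    simpa using hab.sub_const L
  have hsum := hf.sum_range (fun i => (hb i).le) hB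
  rw [Asymptotics.isLittleO_iff_tendsto] at hsum
  · have h1 : Tendsto (fun n => (∑ i ∈ Finset.range n, a i) /
        (∑ i ∈ Finset.range n, b i) - L) atTop (nhds 0) := by
      apply hsum.congr'
      filter_upwards [hB.eventually_gt_atTop 0] with n hn
      rw [Finset.sum_sub_distrib, ← Finset.mul_sum, sub_div,
        mul_div_assoc, div_self hn.ne', mul_one]
    simpa using h1.add_const L
  · intro x hx
    rcases Nat.eq_zero_or_pos x with h | h
    · subst h; simp
    · exact absurd hx (Finset.sum_pos (fun i _ => hb i) (Finset.nonempty_range_iff.mpr h.ne')).ne'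

theorem stmt_6 (w : ℕ → ℝ) (hw : ∀ n, 0 < w n)
    (S : ℕ → ℝ) (hS : ∀ n, S n = ∑ i ∈ Finset.range (n + 1), w i)
    (p : ℝ) (hp : p < 1)
    (η : ℝ) (hη0 : 0 ≤ η) (hη1 : η < 1)
    (h0 : Tendsto (fun n => w n / S n) atTop (nhds η))
    (htop : Tendsto S atTop atTop) :
    Tendsto
      (fun n => ∑ k ∈ Finset.range (n + 1),
        (w k / S n) * Real.rpow (S k / S n) (-p))
      atTop
      (nhds (if η = 0 then 1 / (1 - p)
        else η / (1 - Real.rpow (1 - η) (1 - p)))) := by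
  have hrpow : ∀ x y : ℝ, Real.rpow x y = x ^ y := fun _ _ => rfl
  simp only [hrpow]
  set q : ℝ := 1 - p with hqdef
  have hq : 0 < q := by linarith
  have Spos : ∀ n, 0 < S n := by
    intro n
    rw [hS]
    exact Finset.sum_pos (fun i _ => hw i) (Finset.nonempty_range_iff.mpr (Nat.succ_ne_zero n))
  have hstep : ∀ n, S (n + 1) = S n + w (n + 1) := by
    intro n
    rw [hS, hS]
    exact Finset.sum_range_succ w (n + 1)
  have Smono : ∀ n, S n < S (n + 1) := by
    intro n
    rw [hstep n]
    linarith [hw (n + 1)]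
  -- the sequences for Stolz–Cesàro
  set a : ℕ → ℝ := fun k => w k * S k ^ (-p) with hadef
  set b : ℕ → ℝ := fun k => S k ^ q - (if k = 0 then 0 else S (k - 1) ^ q) with hbdef
  have hb : ∀ k, 0 < b k := by
    intro k
    cases k with
    | zero => simpa [hbdef] using Real.rpow_pos_of_pos (Spos 0) q
    | succ m =>
      simp only [hbdef, Nat.succ_ne_zero, if_false, Nat.add_sub_cancel]
      have := Real.rpow_lt_rpow (Spos m).le (Smono m) hq
      linarith
  have hBsum : ∀ n, ∑ i ∈ Finset.range (n + 1), b i = S n ^ q := by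
    intro n
    induction n with
    | zero => simp [hbdef]
    | succ m ih =>
      rw [Finset.sum_range_succ, ih]
      simp only [hbdef, Nat.succ_ne_zero, if_false, Nat.add_sub_cancel]
      ring
  have hBtop : Tendsto (fun n => ∑ i ∈ Finset.range n, b i) atTop atTop := by
    rw [← tendsto_add_atTop_iff_nat 1]
    have : Tendsto (fun n => S n ^ q) atTop atTop :=
      (tendsto_rpow_atTop hq).comp htop
    exact this.congr fun n => (hBsum n).symm
  -- t n = w n / S n, and the ratio a n / b n equals g (t n) eventually
  set t : ℕ → ℝ := fun n => w n / S n with htdef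
  have ht_pos : ∀ n, 0 < t n := fun n => div_pos (hw n) (Spos n)
  have hratio : ∀ n, a (n + 1) / b (n + 1) = t (n + 1) / (1 - (1 - t (n + 1)) ^ q) := by
    intro n
    have hSn := Spos n
    have hSn1 := Spos (n + 1)
    have h1t : 1 - t (n + 1) = S n / S (n + 1) := by
      simp only [htdef]; field_simp
      linarith [hstep n]
    have hpow : (1 - t (n + 1)) ^ q = S n ^ q / S (n + 1) ^ q := by
      rw [h1t, Real.div_rpow hSn.le hSn1.le]
    have hqpos : (0:ℝ) < S (n + 1) ^ q := Real.rpow_pos_of_pos hSn1 q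
    have hdiff : (0:ℝ) < S (n + 1) ^ q - S n ^ q := by
      have := Real.rpow_lt_rpow hSn.le (Smono n) hq
      linarith
    have hnegp : S (n + 1) ^ (-p) = S (n + 1) ^ q / S (n + 1) := by
      rw [show (-p : ℝ) = q - 1 by ring, Real.rpow_sub hSn1, Real.rpow_one]
    simp only [hadef, hbdef, Nat.succ_ne_zero, if_false, Nat.add_sub_cancel, hpow, hnegp, htdef]
    have hlt : S n ^ q / S (n + 1) ^ q < 1 := by
      rw [div_lt_one hqpos]
      exact Real.rpow_lt_rpow hSn.le (Smono n) hq
    rw [show (1 - w (n + 1) / S (n + 1)) ^ q = S n ^ q / S (n + 1) ^ q from hpow]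
    rw [div_eq_div_iff hdiff.ne' (by linarith : (0:ℝ) < 1 - S n ^ q / S (n + 1) ^ q).ne']
    field_simp
  -- limit of the ratio
  set L : ℝ := if η = 0 then 1 / (1 - p) else η / (1 - (1 - η) ^ q) with hLdef
  have hglim : Tendsto (fun n => t n / (1 - (1 - t n) ^ q)) atTop (nhds L) := by
    by_cases hη : η = 0
    · -- derivative / slope argument
      subst hη
      simp only [hLdef, if_pos rfl]
      have hd1 : HasDerivAt (fun x : ℝ => 1 - x) (-1) 0 := by
        simpa using (hasDerivAt_id (0:ℝ)).const_sub 1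
      have hd3 : HasDerivAt (fun x : ℝ => 1 - (1 - x) ^ q) q 0 := by
        have h := (hd1.rpow_const (p := q) (Or.inl (by norm_num : (1:ℝ) - 0 ≠ 0))).const_sub 1
        refine h.congr_deriv ?_
        norm_num [Real.one_rpow]
      rw [hasDerivAt_iff_tendsto_slope] at hd3
      have htn : Tendsto t atTop (nhdsWithin 0 {(0:ℝ)}ᶜ) := by
        apply tendsto_nhdsWithin_of_tendsto_nhds_of_eventually_within _ h0
        exact Eventually.of_forall fun n => (ht_pos n).ne'
      have hslope : Tendsto (fun n => (1 - (1 - t n) ^ q) / t n) atTop (nhds q) := by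
        have := hd3.comp htn
        apply this.congr
        intro n
        simp [slope_def_field, Real.one_rpow, div_eq_div_iff]
      have hq0 : q ≠ 0 := hq.ne'
      have := hslope.inv₀ hq0
      have heq : (fun n => ((1 - (1 - t n) ^ q) / t n)⁻¹)
          = fun n => t n / (1 - (1 - t n) ^ q) := by
        funext n; rw [inv_div]
      rw [heq] at this
      simpa [one_div, hqdef] using this
    · -- continuity argument
      simp only [hLdef, if_neg hη]
      have hηpos : 0 < η := lt_of_le_of_ne hη0 (Ne.symm hη)
      have hden_lim : Tendsto (fun n => 1 - (1 - t n) ^ q) atTop (nhds (1 - (1 - η) ^ q)) := by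
        apply tendsto_const_nhds.sub
        have hcont : ContinuousAt (fun x : ℝ => x ^ q) (1 - η) :=
          Real.continuousAt_rpow_const _ _ (Or.inl (by linarith))
        exact hcont.tendsto.comp (tendsto_const_nhds.sub h0)
      have hden_ne : 1 - (1 - η) ^ q ≠ 0 := by
        have : (1 - η) ^ q < 1 := Real.rpow_lt_one (by linarith) (by linarith) hq
        linarith
      exact h0.div hden_lim hden_ne
  have hab : Tendsto (fun n => a n / b n) atTop (nhds L) := by
    have h1 : Tendsto (fun n => a (n + 1) / b (n + 1)) atTop (nhds L) := by
      have h2 : Tendsto (fun n => t (n + 1) / (1 - (1 - t (n + 1)) ^ q)) atTop (nhds L) :=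
        hglim.comp (tendsto_add_atTop_nat 1)
      exact h2.congr fun n => (hratio n).symm
    exact (tendsto_add_atTop_iff_nat 1).mp h1
  have main := stolz_cesaro hb hBtop hab
  have final := main.comp (tendsto_add_atTop_nat 1)
  apply final.congr
  intro n
  simp only [Function.comp]
  rw [hBsum n]
  rw [Finset.sum_div]
  apply Finset.sum_congr rfl
  intro k _
  have hSn := Spos n
  have hSk := Spos k
  have h1 : (S k / S n) ^ (-p) = S k ^ (-p) / S n ^ (-p) :=
    Real.div_rpow hSk.le hSn.le _
  have h2 : S n ^ q = S n * S n ^ (-p) := by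
    rw [show q = 1 + (-p) by ring, Real.rpow_add hSn, Real.rpow_one]
  rw [h1, h2, hadef]
  have hne : S n ^ (-p) ≠ 0 := (Real.rpow_pos_of_pos hSn _).ne'
  field_simp
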